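/- Let (a_i)_{i≥1} be a sequence of real numbers bounded above by A, and let 0 < c2 < c ≤ A. Suppose there exists N such that (1/n)·∑_{i=1}^n a_i ≥ c for all n ≥ N. Then there exist δ > 0 (depending only on A, c, c2) and infinitely many integers m ('Pliss times') such that (1/k)·∑_{i=m-k+1}^{m} a_i ≥ c2 for every 1 ≤ k ≤ m; moreover the set H of such m has lower density at least δ, i.e., #(H ∩ [1,n]) ≥ δ·n for all sufficiently large n. -/

import Mathlib

/-- Pliss Lemma: if the Cesàro averages of a sequence bounded above by `A`
eventually exceed `c`, then for any `c₂ ∈ (0, c)` the set of Pliss times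
(times `m` at which all backward averages exceed `c₂`) is infinite and has
lower density at least some `δ > 0` depending only on `A, c, c₂`. -/
theorem pliss_lemma (A c c2 : ℝ) (hc2 : 0 < c2) (hcc : c2 < c) (hcA : c ≤ A) :
    ∃ δ : ℝ, 0 < δ ∧
      ∀ a : ℕ → ℝ, (∀ i, 1 ≤ i → a i ≤ A) →
        (∃ N : ℕ, ∀ n : ℕ, N ≤ n → c ≤ (1 / (n : ℝ)) * ∑ i ∈ Finset.Icc 1 n, a i) →
        (Set.Infinite {m : ℕ | 1 ≤ m ∧ ∀ k : ℕ, 1 ≤ k → k ≤ m →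
            c2 ≤ (1 / (k : ℝ)) * ∑ i ∈ Finset.Icc (m - k + 1) m, a i}) ∧
        (∃ N' : ℕ, ∀ n : ℕ, N' ≤ n →
          δ * (n : ℝ) ≤
            (({m : ℕ | 1 ≤ m ∧ ∀ k : ℕ, 1 ≤ k → k ≤ m →
              c2 ≤ (1 / (k : ℝ)) * ∑ i ∈ Finset.Icc (m - k + 1) m, a i} ∩
              Set.Icc 1 n).ncard : ℝ)) := by
  classical
  have hA2 : (0:ℝ) < A - c2 := by linarith
  refine ⟨(c - c2) / (A - c2), div_pos (by linarith) hA2, ?_⟩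
  rintro a ha ⟨N, hN⟩
  set Hset : Set ℕ := {m : ℕ | 1 ≤ m ∧ ∀ k : ℕ, 1 ≤ k → k ≤ m →
      c2 ≤ (1 / (k : ℝ)) * ∑ i ∈ Finset.Icc (m - k + 1) m, a i} with hHset
  set S : ℕ → ℝ := fun n => (∑ i ∈ Finset.Icc 1 n, a i) - c2 * n with hSdef
  -- step bound
  have hstep : ∀ n : ℕ, S (n + 1) ≤ S n + (A - c2) := by
    intro n
    have hsum : ∑ i ∈ Finset.Icc 1 (n + 1), a i
        = (∑ i ∈ Finset.Icc 1 n, a i) + a (n + 1) :=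
      Finset.sum_Icc_succ_top (by omega) a
    have := ha (n + 1) (by omega)
    simp only [hSdef, hsum]
    push_cast
    linarith
  -- Pliss predicate equals record predicate
  have hIcc_Ioc : ∀ x : ℕ, Finset.Icc 1 x = Finset.Ioc 0 x := fun x => Finset.Icc_add_one_left_eq_Ioc 0 x
  have hsplit : ∀ m k : ℕ, 1 ≤ k → k ≤ m →
      ∑ i ∈ Finset.Icc (m - k + 1) m, a i
        = (∑ i ∈ Finset.Icc 1 m, a i) - ∑ i ∈ Finset.Icc 1 (m - k), a i := by
    intro m k hk hkm
    have h1 : Finset.Icc (m - k + 1) m = Finset.Ioc (m - k) m := Finset.Icc_add_one_left_eq_Ioc _ _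
    have h2 := Finset.sum_Ioc_consecutive a (Nat.zero_le (m - k)) (Nat.sub_le m k)
    rw [h1, hIcc_Ioc, hIcc_Ioc, ← h2]
    ring
  have hequiv : ∀ m : ℕ, 1 ≤ m →
      ((∀ k : ℕ, 1 ≤ k → k ≤ m →
        c2 ≤ (1 / (k : ℝ)) * ∑ i ∈ Finset.Icc (m - k + 1) m, a i)
      ↔ (∀ j < m, S j ≤ S m)) := by
    intro m hm
    have key : ∀ k : ℕ, 1 ≤ k → k ≤ m →
        ((c2 ≤ (1 / (k : ℝ)) * ∑ i ∈ Finset.Icc (m - k + 1) m, a i)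
          ↔ S (m - k) ≤ S m) := by
      intro k hk hkm
      have hk0 : (0:ℝ) < (k:ℝ) := by exact_mod_cast hk
      have hcast : ((m - k : ℕ) : ℝ) = (m : ℝ) - (k : ℝ) := by
        push_cast [Nat.cast_sub hkm]; ring
      rw [hsplit m k hk hkm, one_div, inv_mul_eq_div, le_div_iff₀ hk0]
      simp only [hSdef]
      constructor <;> intro h <;> [skip; skip] <;> nlinarith [hcast]
    constructor
    · intro h j hj
      have hk : 1 ≤ m - j := by omega
      have hkm : m - j ≤ m := Nat.sub_le m j
      have := (key (m - j) hk hkm).mp (h (m - j) hk hkm)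
      have hj' : m - (m - j) = j := by omega
      rwa [hj'] at this
    · intro h k hk hkm
      exact (key k hk hkm).mpr (h (m - k) (by omega))
  -- record finsets
  set P : ℕ → Prop := fun m => ∀ j < m, S j ≤ S m with hP
  set R : ℕ → Finset ℕ := fun n => (Finset.Icc 1 n).filter P with hR
  have hsetR : ∀ n : ℕ, Hset ∩ Set.Icc 1 n = ↑(R n) := by
    intro n
    ext m
    simp only [hHset, hR, Finset.coe_filter, Set.mem_inter_iff, Set.mem_setOf_eq,
      Set.mem_Icc, Finset.mem_Icc]
    constructor
    · rintro ⟨⟨hm1, hm2⟩, hm3, hm4⟩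
      exact ⟨⟨hm1, hm4⟩, (hequiv m hm1).mp hm2⟩
    · rintro ⟨⟨hm1, hm4⟩, hm2⟩
      exact ⟨⟨hm1, (hequiv m hm1).mpr hm2⟩, hm1, hm4⟩
  -- running max
  set M : ℕ → ℝ := fun n => (Finset.range (n + 1)).sup' Finset.nonempty_range_add_one S with hM
  have hRmono : ∀ n : ℕ, (R n).card ≤ (R (n + 1)).card := by
    intro n
    exact Finset.card_le_card (Finset.filter_subset_filter P
      (Finset.Icc_subset_Icc_right (by omega)))
  have hkey : ∀ n : ℕ, M n ≤ (A - c2) * (R n).card := by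
    intro n
    induction n with
    | zero =>
      have : M 0 = S 0 := by simp [hM]
      have hS0 : S 0 = 0 := by simp [hSdef]
      rw [this, hS0]
      positivity
    | succ n ih =>
      apply Finset.sup'_le
      intro j hj
      rw [Finset.mem_range] at hj
      rcases Nat.lt_succ_iff_lt_or_eq.mp hj with hj' | hj'
      · have h1 : S j ≤ M n := Finset.le_sup' S (Finset.mem_range.mpr hj')
        have h3 : ((R n).card : ℝ) ≤ ((R (n + 1)).card : ℝ) := by exact_mod_cast hRmono n
        nlinarith [ih, h1]
      · subst hj'
        by_cases hp : P (n + 1)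
        · have hins : R (n + 1) = insert (n + 1) (R n) := by
            show Finset.filter P (Finset.Icc 1 (n + 1))
              = insert (n + 1) (Finset.filter P (Finset.Icc 1 n))
            rw [← Finset.insert_Icc_right_eq_Icc_add_one (by omega : 1 ≤ n + 1),
              Finset.filter_insert, if_pos hp]
          have hnot : (n + 1) ∉ R n := by
            simp [hR, Finset.mem_filter]
          have hcard : (R (n + 1)).card = (R n).card + 1 := by
            rw [hins, Finset.card_insert_of_notMem hnot]
          have h1 : S n ≤ M n := Finset.le_sup' S (Finset.self_mem_range_succ n)
          have := hstep n
          rw [hcard]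
          push_cast
          nlinarith [ih]
        · simp only [hP] at hp
          push_neg at hp
          obtain ⟨j0, hj0, hj0'⟩ := hp
          have h1 : S j0 ≤ M n := Finset.le_sup' S (Finset.mem_range.mpr (by omega))
          have h2 : S (n + 1) ≤ M n := le_of_lt (hj0'.trans_le h1)
          have h3 : ((R n).card : ℝ) ≤ ((R (n + 1)).card : ℝ) := by exact_mod_cast hRmono n
          nlinarith [ih, h2]
  -- density bound
  have hdens : ∀ n : ℕ, max N 1 ≤ n →
      (c - c2) / (A - c2) * n ≤ ((R n).card : ℝ) := by
    intro n hn
    have hn1 : 1 ≤ n := le_trans (le_max_right N 1) hn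
    have hnN : N ≤ n := le_trans (le_max_left N 1) hn
    have hn0 : (0:ℝ) < n := by exact_mod_cast hn1
    have hTn : c * n ≤ ∑ i ∈ Finset.Icc 1 n, a i := by
      have := hN n hnN
      rw [one_div, inv_mul_eq_div, le_div_iff₀ hn0] at this
      linarith
    have hSn : (c - c2) * n ≤ S n := by simp only [hSdef]; nlinarith
    have hSM : S n ≤ M n := Finset.le_sup' S (Finset.self_mem_range_succ n)
    have := hkey n
    rw [div_mul_eq_mul_div, div_le_iff₀ hA2]
    nlinarith
  constructor
  · -- infinite
    intro hfin
    obtain ⟨n0, hn0⟩ := exists_nat_gt ((Hset.ncard : ℝ) / ((c - c2) / (A - c2)))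
    set n := max n0 (max N 1) with hn
    have hnN : max N 1 ≤ n := le_max_right _ _
    have hn0n : ((Hset.ncard : ℝ) / ((c - c2) / (A - c2))) < n := by
      refine lt_of_lt_of_le hn0 ?_
      exact_mod_cast le_max_left n0 (max N 1)
    have h1 := hdens n hnN
    have h2 : ((R n).card : ℝ) ≤ Hset.ncard := by
      have h4 : (Hset ∩ Set.Icc 1 n).ncard ≤ Hset.ncard :=
        Set.ncard_le_ncard Set.inter_subset_left hfin
      have hc : (Hset ∩ Set.Icc 1 n).ncard = (R n).card := by
        rw [hsetR n, Set.ncard_coe_finset]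
      rw [← hc]
      exact_mod_cast h4
    have hδ : (0:ℝ) < (c - c2) / (A - c2) := div_pos (by linarith) hA2
    rw [div_lt_iff₀ hδ] at hn0n
    nlinarith
  · refine ⟨max N 1, fun n hn => ?_⟩
    have hc : (Hset ∩ Set.Icc 1 n).ncard = (R n).card := by
      rw [hsetR n, Set.ncard_coe_finset]
    rw [hc]
    exact hdens n hn
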